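/- arXiv:1510.05386 — 3 statements merged into one kernel-verified Lean document; each statement's English description precedes it below -/
import Mathlib

section
/- Let θ be a regular cardinal and λ = θ^{+η} for some successor ordinal η < θ. If D is a θ-covering matrix for λ such that CP(D) holds, then S^λ_{>θ} \ A_D is non-stationary in λ. -/
noncomputable section

universe u

open Cardinal Set

/-- The order type of a set of ordinals: the unique ordinal `o` such that `s` is
order-isomorphic to `Set.Iio o` (and `0` if there is no such ordinal). -/
def otp (s : Set Ordinal) : Ordinal :=
  sInf {o : Ordinal | Nonempty (s ≃o Set.Iio o)}

/-- `A` is unbounded in `β`. -/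
def IsUnboundedIn (A : Set Ordinal) (β : Ordinal) : Prop :=
  ∀ γ < β, ∃ δ ∈ A, γ ≤ δ

/-- `γ` is a limit of elements of `C`. -/
def IsAccPt (C : Set Ordinal) (γ : Ordinal) : Prop :=
  ∀ δ < γ, ∃ ε ∈ C, δ < ε ∧ ε < γ

/-- `C` is club in `β`: a subset of `β`, unbounded in `β`, and closed under limits below `β`. -/
def IsClubIn (C : Set Ordinal) (β : Ordinal) : Prop :=
  C ⊆ Set.Iio β ∧ IsUnboundedIn C β ∧ ∀ γ < β, 0 < γ → IsAccPt C γ → γ ∈ C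

/-- `S` is stationary in `β`: it meets every club in `β`. -/
def IsStationaryIn (S : Set Ordinal) (β : Ordinal) : Prop :=
  ∀ C, IsClubIn C β → (S ∩ C).Nonempty

/-- `D` is a `θ`-covering matrix for `lam`. -/
def IsCoveringMatrix (θ lam : Cardinal) (D : Ordinal → Ordinal → Set Ordinal) : Prop :=
  (∀ β < lam.ord, (⋃ i ∈ Set.Iio θ.ord, D i β) = Set.Iio β) ∧
  (∀ β < lam.ord, ∀ i j, i < j → j < θ.ord → D i β ⊆ D j β) ∧
  (∀ β γ, β < γ → γ < lam.ord → ∀ i < θ.ord, ∃ j < θ.ord, D i β ⊆ D j γ)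

/-- `D` is transitive. -/
def TransitiveMatrix (θ lam : Cardinal) (D : Ordinal → Ordinal → Set Ordinal) : Prop :=
  ∀ α β, α < β → β < lam.ord → ∀ i < θ.ord, α ∈ D i β → D i α ⊆ D i β

/-- `D` is uniform: every limit `β < lam` has some `D i β` containing a club in `β`. -/
def UniformMatrix (θ lam : Cardinal) (D : Ordinal → Ordinal → Set Ordinal) : Prop :=
  ∀ β < lam.ord, Order.IsSuccLimit β → ∃ i < θ.ord, ∃ C ⊆ D i β, IsClubIn C β

/-- `D` is normal: the order types of its entries are bounded below `lam`. -/
def NormalMatrix (θ lam : Cardinal) (D : Ordinal → Ordinal → Set Ordinal) : Prop :=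
  ∃ b < lam.ord, ∀ i < θ.ord, ∀ γ < lam.ord, otp (D i γ) < b

/-- `β_D`: the least ordinal strictly above the order types of all entries of `D`. -/
def matrixBound (θ lam : Cardinal) (D : Ordinal → Ordinal → Set Ordinal) : Ordinal :=
  sInf {b | ∀ i < θ.ord, ∀ γ < lam.ord, otp (D i γ) < b}

/-- `D` is downward coherent. -/
def DownwardCoherent (θ lam : Cardinal) (D : Ordinal → Ordinal → Set Ordinal) : Prop :=
  ∀ α β, α < β → β < lam.ord → ∀ i < θ.ord, ∃ j < θ.ord, D i β ∩ Set.Iio α ⊆ D j α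

/-- `D` is locally downward coherent. -/
def LocallyDownwardCoherent (θ lam : Cardinal.{u})
    (D : Ordinal.{u} → Ordinal.{u} → Set Ordinal.{u}) : Prop :=
  ∀ X : Set Ordinal.{u}, X ⊆ Set.Iio lam.ord → #X ≤ Cardinal.lift.{u + 1} θ →
    ∃ γX < lam.ord, ∀ β < lam.ord, ∀ i < θ.ord, ∃ j < θ.ord,
      X ∩ D i β ⊆ X ∩ D j γX

/-- `D` is strongly locally downward coherent. -/
def StronglyLocallyDownwardCoherent (θ lam : Cardinal.{u})
    (D : Ordinal.{u} → Ordinal.{u} → Set Ordinal.{u}) : Prop :=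
  ∀ X : Set Ordinal.{u}, X ⊆ Set.Iio lam.ord → #X ≤ Cardinal.lift.{u + 1} θ →
    ∃ γX < lam.ord, ∀ β, γX ≤ β → β < lam.ord →
      ∃ i < θ.ord, ∀ j, i ≤ j → j < θ.ord → X ∩ D j β = X ∩ D j γX

/-- `D` covers `[T]^κ`. -/
def Covers (θ lam : Cardinal.{u}) (D : Ordinal.{u} → Ordinal.{u} → Set Ordinal.{u})
    (T : Set Ordinal.{u}) (κ : Cardinal.{u}) : Prop :=
  ∀ X ⊆ T, #X = Cardinal.lift.{u + 1} κ → ∃ i < θ.ord, ∃ β < lam.ord, X ⊆ D i β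

/-- The covering property `CP(D)`. -/
def CP (θ lam : Cardinal) (D : Ordinal → Ordinal → Set Ordinal) : Prop :=
  ∃ T ⊆ Set.Iio lam.ord, IsUnboundedIn T lam.ord ∧ Covers θ lam D T θ

/-- `CP(lam, θ)`: `CP(D)` holds for every locally downward coherent `θ`-covering matrix `D`. -/
def CPAll (θ lam : Cardinal) : Prop :=
  ∀ D, IsCoveringMatrix θ lam D → LocallyDownwardCoherent θ lam D → CP θ lam D

/-- `A_D`: the set of good points for `D`. -/
def goodPoints (θ lam : Cardinal) (D : Ordinal → Ordinal → Set Ordinal) : Set Ordinal :=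
  {β | β < lam.ord ∧ θ < Ordinal.cof β ∧
    ∃ A ⊆ Set.Iio β, IsUnboundedIn A β ∧
      ∀ γ < β, ∃ α < β, ∃ i < θ.ord, A ∩ Set.Iio γ ⊆ D i α}

/-- `θ^{+η}`: the `η`-th iterated cardinal successor of `θ`. -/
def iterSucc (θ : Cardinal) (η : Ordinal) : Cardinal :=
  Ordinal.limitRecOn η θ (fun _ ih => Order.succ ih)
    (fun o _ ih => ⨆ i : Set.Iio o, ih i.1 i.2)

/-- `f <* g` mod bounded subsets of `θ`. -/
def ltStar (θ : Cardinal) (f g : Ordinal → Ordinal) : Prop :=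
  ∃ i < θ.ord, ∀ j, i ≤ j → j < θ.ord → f j < g j

/-- `⟨f β : β < δ⟩` is a club-increasing sequence of functions from `θ` to the ordinals. -/
def ClubIncreasing (θ : Cardinal) (δ : Ordinal) (f : Ordinal → Ordinal → Ordinal) : Prop :=
  (∀ β < δ, ∀ i j, i ≤ j → j < θ.ord → f β i ≤ f β j) ∧
  (∀ α β, α < β → β < δ → ltStar θ (f α) (f β)) ∧
  (∀ β < δ, θ < Ordinal.cof β → ∃ C, IsClubIn C β ∧ ∃ i < θ.ord,
    ∀ α ∈ C, ∀ j, i ≤ j → j < θ.ord → f α j < f β j)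

/-- `γ_f`: the least ordinal strictly above all values of the sequence. -/
def seqBound (θ : Cardinal) (δ : Ordinal) (f : Ordinal → Ordinal → Ordinal) : Ordinal :=
  sInf {γ | ∀ β < δ, ∀ i < θ.ord, f β i < γ}

/-- `g` is an exact upper bound for `⟨f β : β < δ⟩` with respect to `<*` on `θ`. -/
def IsEub (θ : Cardinal) (δ : Ordinal) (f : Ordinal → Ordinal → Ordinal)
    (g : Ordinal → Ordinal) : Prop :=
  (∀ β < δ, ltStar θ (f β) g) ∧
  ∀ h : Ordinal → Ordinal, ltStar θ h g → ∃ β < δ, ltStar θ h (f β)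

/-- The simultaneous stationary reflection principle `R(lam, θ)`. -/
def RPrinciple (lam θ : Cardinal) : Prop :=
  ∃ S ⊆ Set.Iio lam.ord, IsStationaryIn S lam.ord ∧
    ∀ T : Ordinal → Set Ordinal,
      (∀ j < θ.ord, T j ⊆ S ∧ IsStationaryIn (T j) lam.ord) →
      ∃ α < lam.ord, ℵ₀ < Ordinal.cof α ∧
        ∀ j < θ.ord, IsStationaryIn (T j ∩ Set.Iio α) α

/-- A `□_κ`-sequence. -/
def IsSquareSeq (κ : Cardinal) (C : Ordinal → Set Ordinal) : Prop :=
  ∀ β < (Order.succ κ).ord, Order.IsSuccLimit β →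
    IsClubIn (C β) β ∧ otp (C β) ≤ κ.ord ∧
    ∀ α ∈ C β, 0 < α → IsAccPt (C β) α → C β ∩ Set.Iio α = C α

/-- The square principle `□_κ`. -/
def SquarePrinciple (κ : Cardinal) : Prop := ∃ C, IsSquareSeq κ C

/-- `f <* g` mod finite on `B ⊆ ω`. -/
def ltStarB (B : Set ℕ) (f g : ℕ → Ordinal) : Prop :=
  ∃ m, ∀ n ∈ B, m ≤ n → f n < g n

/-- `g` is an exact upper bound for `⟨f α : α < δ⟩` with respect to `<*` mod finite on `B`. -/
def IsEubB (B : Set ℕ) (δ : Ordinal) (f : Ordinal → ℕ → Ordinal) (g : ℕ → Ordinal) : Prop :=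
  (∀ α < δ, ltStarB B (f α) g) ∧
  ∀ h : ℕ → Ordinal, ltStarB B h g → ∃ α < δ, ltStarB B h (f α)

/-- A scale of length `ℵ_{ω+1}` in `∏_{n ∈ B} ℵ_n`. -/
def IsScale (B : Set ℕ) (f : Ordinal → ℕ → Ordinal) : Prop :=
  (∀ α < (Cardinal.aleph (Ordinal.omega0 + 1)).ord, ∀ n ∈ B, f α n < (Cardinal.aleph n).ord) ∧
  (∀ α β, α < β → β < (Cardinal.aleph (Ordinal.omega0 + 1)).ord → ltStarB B (f α) (f β)) ∧
  (∀ g : ℕ → Ordinal, (∀ n ∈ B, g n < (Cardinal.aleph n).ord) →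
    ∃ α < (Cardinal.aleph (Ordinal.omega0 + 1)).ord, ltStarB B g (f α))



namespace Stmt15Aux


theorem bound_of_card_lt_cof {o : Ordinal.{u}} {S : Set Ordinal.{u}}
    (h1 : ∀ x ∈ S, x < o) (h2 : #S < Cardinal.lift.{u+1} o.cof) :
    ∃ b < o, ∀ x ∈ S, x ≤ b := by
  have hsub : S ⊆ Set.Iio o := fun x hx => h1 x hx
  have hsm : Small.{u} S := small_subset hsub
  set f : Shrink.{u} S → Ordinal.{u} := fun i => (((equivShrink S).symm i : S) : Ordinal) with hf
  have hcard : #(Shrink.{u} S) < o.cof := by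
    have hl : Cardinal.lift.{u+1} #(Shrink.{u} S) < Cardinal.lift.{u+1} o.cof := by
      rw [Cardinal.lift_mk_shrink''.{u+1, u}]; exact h2
    exact Cardinal.lift_lt.mp hl
  have hlt : ∀ i, f i < o := fun i => h1 _ (((equivShrink S).symm i).2)
  refine ⟨iSup f, Ordinal.iSup_lt_ord hcard hlt, fun x hx => ?_⟩
  have : x = f (equivShrink S ⟨x, hx⟩) := by simp [hf]
  rw [this]
  exact Ordinal.le_iSup f _

theorem pigeonhole {o t : Ordinal.{u}} (ho : Order.IsSuccLimit o) (U : Set Ordinal.{u})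
    (hU : ∀ γ < o, ∃ δ ∈ U, γ ≤ δ) (g : Ordinal.{u} → Ordinal.{u})
    (hg : ∀ x ∈ U, g x < t)
    (ht : Cardinal.lift.{u+1} t.card < Cardinal.lift.{u+1} o.cof) :
    ∃ i < t, ∀ γ < o, ∃ δ ∈ U, g δ = i ∧ γ ≤ δ := by
  by_contra hcon
  push_neg at hcon
  have hbd : ∀ i : Ordinal.{u}, ∃ b, i < t → (b < o ∧ ∀ δ ∈ U, g δ = i → δ < b) := by
    intro i
    by_cases hi : i < t
    · obtain ⟨γ, hγo, hγ⟩ := hcon i hi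
      exact ⟨γ, fun _ => ⟨hγo, fun δ hδ hgδ => (hγ δ hδ hgδ)⟩⟩
    · exact ⟨0, fun h => absurd h hi⟩
  choose bd hbd' using hbd
  have hS : ∀ x ∈ bd '' Set.Iio t, x < o := by
    rintro x ⟨i, hi, rfl⟩; exact (hbd' i hi).1
  have hcd : #(bd '' Set.Iio t) < Cardinal.lift.{u+1} o.cof :=
    lt_of_le_of_lt (Cardinal.mk_image_le) (by rwa [Ordinal.mk_Iio_ordinal])
  obtain ⟨B, hBo, hB⟩ := bound_of_card_lt_cof hS hcd
  obtain ⟨δ, hδU, hδ⟩ := hU (B + 1) (by rw [Ordinal.add_one_eq_succ]; exact ho.succ_lt hBo)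
  have h1 : δ < bd (g δ) := (hbd' (g δ) (hg δ hδU)).2 δ hδU rfl
  have h2 : bd (g δ) ≤ B := hB _ ⟨g δ, hg δ hδU, rfl⟩
  have : B + 1 ≤ B := le_trans hδ (le_trans h1.le h2)
  exact absurd this (by simp)



theorem iterSucc_zero (θ : Cardinal.{u}) : iterSucc θ (0 : Ordinal.{u}) = θ :=
  Ordinal.limitRecOn_zero _ _ _

theorem iterSucc_succ (θ : Cardinal.{u}) (o : Ordinal.{u}) :
    iterSucc θ (Order.succ o) = Order.succ (iterSucc θ o) :=
  Ordinal.limitRecOn_succ _ _ _ _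

theorem iterSucc_limit (θ : Cardinal.{u}) {o : Ordinal.{u}} (h : Order.IsSuccLimit o) :
    iterSucc θ o = ⨆ i : Set.Iio o, iterSucc θ i.1 :=
  Ordinal.limitRecOn_limit _ _ _ _ h

theorem iterSucc_bdd (θ : Cardinal.{u}) (o : Ordinal.{u}) :
    BddAbove (Set.range fun i : Set.Iio o => iterSucc θ i.1) := by
  have : Small.{u} (Set.Iio o) := inferInstance
  exact Cardinal.bddAbove_range _

theorem iterSucc_mono (θ : Cardinal.{u}) :
    ∀ ρ : Ordinal.{u}, ∀ ρ' ≤ ρ, iterSucc θ ρ' ≤ iterSucc θ ρ := by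
  intro ρ
  induction ρ using Ordinal.induction with
  | _ ρ IH =>
    intro ρ' hρ'
    rcases eq_or_lt_of_le hρ' with rfl | hlt
    · exact le_rfl
    rcases Ordinal.zero_or_succ_or_isSuccLimit ρ with rfl | ⟨a, rfl⟩ | hρ
    · exact absurd hlt (by simp)
    · have h1 : ρ' ≤ a := Order.lt_succ_iff.mp hlt
      calc iterSucc θ ρ' ≤ iterSucc θ a := IH a (Order.lt_succ a) ρ' h1
        _ ≤ iterSucc θ (Order.succ a) := by rw [iterSucc_succ]; exact Order.le_succ _
    · rw [iterSucc_limit θ hρ]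
      exact le_ciSup (iterSucc_bdd θ ρ) ⟨ρ', hlt⟩

theorem le_iterSucc (θ : Cardinal.{u}) (ρ : Ordinal.{u}) : θ ≤ iterSucc θ ρ := by
  have := iterSucc_mono θ ρ 0 (by simp)
  rwa [iterSucc_zero] at this

theorem lt_iterSucc_limit {θ : Cardinal.{u}} {ρ : Ordinal.{u}} (h : Order.IsSuccLimit ρ)
    {c : Cardinal.{u}} (hc : c < iterSucc θ ρ) : ∃ i < ρ, c < iterSucc θ i := by
  rw [iterSucc_limit θ h] at hc
  by_contra hcon
  push_neg at hcon
  have hne : Nonempty (Set.Iio ρ) := ⟨⟨0, h.pos⟩⟩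
  have hub : (⨆ i : Set.Iio ρ, iterSucc θ i.1) ≤ c := ciSup_le' fun i => hcon i.1 i.2
  exact absurd hub (not_le.mpr hc)


theorem claim (θ : Cardinal.{u}) (hθ : θ.IsRegular) (ξ : Ordinal.{u}) (hξθ : ξ < θ.ord)
    (lam : Cardinal.{u}) (hlam : lam = Order.succ (iterSucc θ ξ))
    (D : Ordinal.{u} → Ordinal.{u} → Set Ordinal.{u})
    (h2 : ∀ β < lam.ord, ∀ i j, i < j → j < θ.ord → D i β ⊆ D j β)
    (h3 : ∀ β γ, β < γ → γ < lam.ord → ∀ i < θ.ord, ∃ j < θ.ord, D i β ⊆ D j γ)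
    (T : Set Ordinal.{u}) (hT : T ⊆ Set.Iio lam.ord)
    (hTu : ∀ γ < lam.ord, ∃ δ ∈ T, γ ≤ δ)
    (hcov : ∀ X ⊆ T, #X = Cardinal.lift.{u+1} θ → ∃ i < θ.ord, ∃ β < lam.ord, X ⊆ D i β) :
    ∀ ρ : Ordinal.{u}, ρ ≤ ξ → ∀ X ⊆ T, #X ≤ Cardinal.lift.{u+1} (iterSucc θ ρ) →
      ∃ i < θ.ord, ∃ β < lam.ord, X ⊆ D i β := by
  classical
  have hθ0 := hθ.aleph0_le
  have hν : θ ≤ iterSucc θ ξ := le_iterSucc θ ξ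
  have hνinf : ℵ₀ ≤ iterSucc θ ξ := hθ0.trans hν
  have hlamreg : lam.IsRegular := hlam ▸ Cardinal.isRegular_succ hνinf
  have hlamcof : lam.ord.cof = lam := hlamreg.cof_eq
  have hθcof : θ.ord.cof = θ := hθ.cof_eq
  have hθlam : θ < lam := hlam ▸ lt_of_le_of_lt hν (Order.lt_succ _)
  have hlaminf : ℵ₀ ≤ lam := hθ0.trans hθlam.le
  have hlamlim : Order.IsSuccLimit lam.ord := Cardinal.isSuccLimit_ord hlaminf
  have h2' : ∀ β < lam.ord, ∀ i j, i ≤ j → j < θ.ord → D i β ⊆ D j β := by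
    intro β hβ i j hij hj
    rcases eq_or_lt_of_le hij with rfl | h
    · exact subset_rfl
    · exact h2 β hβ i j h hj
  have base : ∀ X ⊆ T, #X ≤ Cardinal.lift.{u+1} θ →
      ∃ i < θ.ord, ∃ β < lam.ord, X ⊆ D i β := by
    intro X hXT hXc
    have hTbig : Cardinal.lift.{u+1} θ ≤ #T := by
      by_contra hcn
      push_neg at hcn
      have hc2 : #T < Cardinal.lift.{u+1} lam.ord.cof := by
        rw [hlamcof]; exact hcn.trans_le (Cardinal.lift_le.mpr hθlam.le)
      obtain ⟨b, hb, hbd⟩ := bound_of_card_lt_cof (fun x hx => hT hx) hc2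
      obtain ⟨δ, hδT, hδ⟩ := hTu (b + 1)
        (by rw [Ordinal.add_one_eq_succ]; exact hlamlim.succ_lt hb)
      have hlt : b < δ := lt_of_lt_of_le (by rw [Ordinal.add_one_eq_succ]; exact Order.lt_succ b) hδ
      exact absurd (hbd δ hδT) (not_le.mpr hlt)
    obtain ⟨Y, hYT, hYc⟩ := Cardinal.le_mk_iff_exists_subset.mp hTbig
    have hXY : #(X ∪ Y : Set Ordinal) = Cardinal.lift.{u+1} θ := by
      apply le_antisymm
      · refine (Cardinal.mk_union_le _ _).trans ?_
        rw [hYc]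
        calc #X + Cardinal.lift.{u+1} θ ≤ Cardinal.lift.{u+1} θ + Cardinal.lift.{u+1} θ :=
              by gcongr
          _ = Cardinal.lift.{u+1} θ := Cardinal.add_eq_self (Cardinal.aleph0_le_lift.mpr hθ0)
      · rw [← hYc]; exact Cardinal.mk_le_mk_of_subset subset_union_right
    obtain ⟨i, hi, β, hβ, hs⟩ := hcov (X ∪ Y) (union_subset hXT hYT) hXY
    exact ⟨i, hi, β, hβ, subset_union_left.trans hs⟩
  intro ρ
  induction ρ using Ordinal.induction with
  | _ ρ IH => ?_
  intro hρξ X hXT hXc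
  by_cases hsmall : #X ≤ Cardinal.lift.{u+1} θ
  · exact base X hXT hsmall
  rcases Ordinal.zero_or_succ_or_isSuccLimit ρ with rfl | ⟨σ, rfl⟩ | hlim
  · rw [iterSucc_zero] at hXc; exact absurd hXc hsmall
  · -- successor case
    by_cases hXσ : #X ≤ Cardinal.lift.{u+1} (iterSucc θ σ)
    · exact IH σ (Order.lt_succ σ) ((Order.le_succ σ).trans hρξ) X hXT hXσ
    set μ := iterSucc θ (Order.succ σ) with hμ
    have hμs : μ = Order.succ (iterSucc θ σ) := iterSucc_succ θ σ
    have hμX : #X = Cardinal.lift.{u+1} μ := by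
      apply le_antisymm hXc
      rw [hμs, Cardinal.lift_succ]
      exact Order.succ_le_of_lt (not_le.mp hXσ)
    have hμreg : μ.IsRegular := by
      rw [hμs]; exact Cardinal.isRegular_succ (hθ0.trans (le_iterSucc θ σ))
    have hμinf : ℵ₀ ≤ μ := hμreg.aleph0_le
    have hμlam : μ ≤ iterSucc θ ξ := iterSucc_mono θ ξ _ hρξ
    have hθμ : θ < μ := by
      rw [hμs]; exact lt_of_le_of_lt (le_iterSucc θ σ) (Order.lt_succ _)
    have hμlim : Order.IsSuccLimit μ.ord := Cardinal.isSuccLimit_ord hμinf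
    have hIioμ : #(Set.Iio μ.ord) = Cardinal.lift.{u+1} μ := by
      rw [Ordinal.mk_Iio_ordinal, Cardinal.card_ord]
    obtain ⟨e⟩ : Nonempty (Set.Iio μ.ord ≃ X) := Cardinal.eq.mp (hIioμ.trans hμX.symm)
    set Xp : Ordinal.{u} → Set Ordinal.{u} :=
      fun ν => (fun z : Set.Iio μ.ord => (e z : Ordinal)) ''
        {z : Set.Iio μ.ord | (z : Ordinal) < ν} with hXp
    have hcover : ∀ z : Set.Iio μ.ord, ∃ i, i < θ.ord ∧ ∃ β, β < lam.ord ∧ Xp z.1 ⊆ D i β := by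
      intro z
      have hsub : Xp z.1 ⊆ T := by
        rintro x ⟨w, hw, rfl⟩; exact hXT (e w).2
      have hcard : #(Xp z.1) ≤ Cardinal.lift.{u+1} (iterSucc θ σ) := by
        refine Cardinal.mk_image_le.trans ?_
        have h1 : #{w : Set.Iio μ.ord | (w : Ordinal) < z.1} ≤ #(Set.Iio z.1) := by
          refine Cardinal.mk_le_of_injective
            (f := fun w : {w : Set.Iio μ.ord | (w : Ordinal) < z.1} =>
              (⟨w.1.1, w.2⟩ : Set.Iio z.1)) ?_
          intro a c hac
          simp only [Subtype.mk.injEq] at hac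
          exact Subtype.ext (Subtype.ext (by have h := congrArg Subtype.val hac; exact h))
        refine h1.trans ?_
        rw [Ordinal.mk_Iio_ordinal]
        apply Cardinal.lift_le.mpr
        have hzc : (z : Ordinal).card < Order.succ (iterSucc θ σ) := by
          rw [← hμs]; exact Cardinal.lt_ord.mp z.2
        exact Order.lt_succ_iff.mp hzc
      obtain ⟨i, hi, β, hβ, hs⟩ :=
        IH σ (Order.lt_succ σ) ((Order.le_succ σ).trans hρξ) (Xp z.1) hsub hcard
      exact ⟨i, hi, β, hβ, hs⟩
    choose iF hiF βF hβF hsF using hcover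
    have hcdβ : #(Set.range βF) < Cardinal.lift.{u+1} lam.ord.cof := by
      refine lt_of_le_of_lt Cardinal.mk_range_le ?_
      rw [hIioμ, hlamcof]
      exact Cardinal.lift_lt.mpr (lt_of_le_of_lt hμlam (hlam ▸ Order.lt_succ _))
    obtain ⟨b, hb, hbd⟩ := bound_of_card_lt_cof
      (fun x hx => by obtain ⟨z, hz⟩ := hx; exact hz ▸ hβF z) hcdβ
    have hβslam : b + 1 < lam.ord := by
      rw [Ordinal.add_one_eq_succ]; exact hlamlim.succ_lt hb
    have hjex : ∀ z : Set.Iio μ.ord, ∃ j, j < θ.ord ∧ D (iF z) (βF z) ⊆ D j (b + 1) := by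
      intro z
      have hlt : βF z < b + 1 := lt_of_le_of_lt (hbd _ ⟨z, rfl⟩)
        (by rw [Ordinal.add_one_eq_succ]; exact Order.lt_succ b)
      obtain ⟨j, hj, hjs⟩ := h3 (βF z) (b + 1) hlt hβslam (iF z) (hiF z)
      exact ⟨j, hj, hjs⟩
    choose jF hjF hjsF using hjex
    set g : Ordinal.{u} → Ordinal.{u} := fun x => if h : x < μ.ord then jF ⟨x, h⟩ else 0 with hg
    have hμcof : Cardinal.lift.{u+1} θ.ord.card < Cardinal.lift.{u+1} μ.ord.cof := by
      rw [Cardinal.card_ord, hμreg.cof_eq]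
      exact Cardinal.lift_lt.mpr hθμ
    obtain ⟨js, hjs, hV⟩ := pigeonhole (o := μ.ord) (t := θ.ord) hμlim (Set.Iio μ.ord)
      (fun γ hγ => ⟨γ, hγ, le_rfl⟩) g
      (fun x hx => by
        have hx' : x < μ.ord := hx
        show (if h : x < μ.ord then jF ⟨x, h⟩ else 0) < θ.ord
        rw [dif_pos hx']
        exact hjF _) hμcof
    refine ⟨js, hjs, b + 1, hβslam, fun x hx => ?_⟩
    obtain ⟨δ, hδ, hgδ, hδge⟩ := hV ((e.symm ⟨x, hx⟩ : Set.Iio μ.ord).1 + 1)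
      (by rw [Ordinal.add_one_eq_succ]; exact hμlim.succ_lt (e.symm ⟨x, hx⟩).2)
    have hzδ : (e.symm ⟨x, hx⟩ : Set.Iio μ.ord).1 < δ :=
      lt_of_lt_of_le (by rw [Ordinal.add_one_eq_succ]; exact Order.lt_succ _) hδge
    have hxmem : x ∈ Xp δ := ⟨e.symm ⟨x, hx⟩, hzδ, by simp⟩
    have h5 : x ∈ D (jF ⟨δ, hδ⟩) (b + 1) := hjsF ⟨δ, hδ⟩ (hsF ⟨δ, hδ⟩ hxmem)
    have h6 : jF ⟨δ, hδ⟩ = js := by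
      have hδ' : δ < μ.ord := hδ
      rw [← hgδ]
      show jF ⟨δ, hδ⟩ = (if h : δ < μ.ord then jF ⟨δ, h⟩ else 0)
      rw [dif_pos hδ']
    exact h6 ▸ h5
  · -- limit case
    have hXne : Nonempty X := by
      rw [← Cardinal.mk_ne_zero_iff]
      intro h0
      exact hsmall (by rw [h0]; simp)
    obtain ⟨x₀⟩ := hXne
    set c := iterSucc θ ρ with hcdef
    have hIioc : #(Set.Iio c.ord) = Cardinal.lift.{u+1} c := by
      rw [Ordinal.mk_Iio_ordinal, Cardinal.card_ord]
    obtain ⟨emb⟩ : Nonempty (X ↪ Set.Iio c.ord) := (Cardinal.le_def _ _).mp (by rw [hIioc]; exact hXc)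
    set gsur : Set.Iio c.ord → X := fun w => if h : ∃ x : X, emb x = w then h.choose else x₀
      with hgsur
    have hgs : ∀ x : X, gsur (emb x) = x := by
      intro x
      have h : ∃ y : X, emb y = emb x := ⟨x, rfl⟩
      rw [hgsur]
      simp only [dif_pos h]
      exact emb.injective h.choose_spec
    set P : Set.Iio ρ → Set Ordinal.{u} := fun i =>
      (fun w : Set.Iio c.ord => (gsur w : Ordinal)) ''
        {w : Set.Iio c.ord | (w : Ordinal) < (iterSucc θ i.1).ord} with hP
    have hcover : ∀ i : Set.Iio ρ, ∃ j, j < θ.ord ∧ ∃ β, β < lam.ord ∧ P i ⊆ D j β := by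
      intro i
      have hsub : P i ⊆ T := by
        rintro x ⟨w, hw, rfl⟩; exact hXT (gsur w).2
      have hcard : #(P i) ≤ Cardinal.lift.{u+1} (iterSucc θ i.1) := by
        refine Cardinal.mk_image_le.trans ?_
        refine le_trans (Cardinal.mk_le_of_injective
          (f := fun w : {w : Set.Iio c.ord | (w : Ordinal) < (iterSucc θ i.1).ord} =>
            (⟨w.1.1, w.2⟩ : Set.Iio (iterSucc θ i.1).ord))
          (by
            intro a d had
            simp only [Subtype.mk.injEq] at had
            exact Subtype.ext (Subtype.ext (by have h := congrArg Subtype.val had; exact h)))) ?_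
        rw [Ordinal.mk_Iio_ordinal, Cardinal.card_ord]
      obtain ⟨j, hj, β, hβ, hs⟩ := IH i.1 (lt_of_lt_of_le i.2 (le_refl ρ))
        (le_of_lt (lt_of_lt_of_le i.2 hρξ)) (P i) hsub hcard
      exact ⟨j, hj, β, hβ, hs⟩
    choose iF hiF βF hβF hsF using hcover
    have hρθ : ρ < θ.ord := lt_of_le_of_lt hρξ hξθ
    have hcardρθ : Cardinal.lift.{u+1} ρ.card < Cardinal.lift.{u+1} θ :=
      Cardinal.lift_lt.mpr (Cardinal.lt_ord.mp hρθ)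
    have hIioρ : #(Set.Iio ρ) = Cardinal.lift.{u+1} ρ.card := Ordinal.mk_Iio_ordinal ρ
    have hcdβ : #(Set.range βF) < Cardinal.lift.{u+1} lam.ord.cof := by
      refine lt_of_le_of_lt Cardinal.mk_range_le ?_
      rw [hIioρ, hlamcof]
      exact hcardρθ.trans (Cardinal.lift_lt.mpr hθlam)
    obtain ⟨b, hb, hbd⟩ := bound_of_card_lt_cof
      (fun x hx => by obtain ⟨z, hz⟩ := hx; exact hz ▸ hβF z) hcdβ
    have hβslam : b + 1 < lam.ord := by
      rw [Ordinal.add_one_eq_succ]; exact hlamlim.succ_lt hb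
    have hjex : ∀ i : Set.Iio ρ, ∃ j, j < θ.ord ∧ D (iF i) (βF i) ⊆ D j (b + 1) := by
      intro i
      have hlt : βF i < b + 1 := lt_of_le_of_lt (hbd _ ⟨i, rfl⟩)
        (by rw [Ordinal.add_one_eq_succ]; exact Order.lt_succ b)
      obtain ⟨j, hj, hjs⟩ := h3 (βF i) (b + 1) hlt hβslam (iF i) (hiF i)
      exact ⟨j, hj, hjs⟩
    choose jF hjF hjsF using hjex
    have hcdj : #(Set.range jF) < Cardinal.lift.{u+1} θ.ord.cof := by
      refine lt_of_le_of_lt Cardinal.mk_range_le ?_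
      rw [hIioρ, hθcof]
      exact hcardρθ
    obtain ⟨js, hjsθ, hjbd⟩ := bound_of_card_lt_cof
      (fun x hx => by obtain ⟨z, hz⟩ := hx; exact hz ▸ hjF z) hcdj
    refine ⟨js, hjsθ, b + 1, hβslam, fun x hx => ?_⟩
    have hzcard : (emb ⟨x, hx⟩ : Set.Iio c.ord).1.card < c :=
      Cardinal.lt_ord.mp (emb ⟨x, hx⟩).2
    obtain ⟨i, hiρ, hci⟩ := lt_iterSucc_limit hlim hzcard
    have hz2 : (emb ⟨x, hx⟩ : Set.Iio c.ord).1 < (iterSucc θ i).ord := Cardinal.lt_ord.mpr hci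
    have hxP : x ∈ P ⟨i, hiρ⟩ := ⟨emb ⟨x, hx⟩, hz2, by
      show ((gsur (emb ⟨x, hx⟩) : X) : Ordinal) = x
      rw [hgs ⟨x, hx⟩]⟩
    have h5 : x ∈ D (jF ⟨i, hiρ⟩) (b + 1) := hjsF ⟨i, hiρ⟩ (hsF ⟨i, hiρ⟩ hxP)
    exact h2' (b + 1) hβslam _ js (hjbd _ ⟨⟨i, hiρ⟩, rfl⟩) hjsθ h5

end Stmt15Aux

/-- If `lam = θ^{+η}` for a successor ordinal `η < θ` and `CP(D)` holds for a
`θ`-covering matrix `D` for `lam`, then `S^lam_{>θ} \\ A_D` is non-stationary in `lam`. -/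
theorem stmt15 (θ : Cardinal) (hθ : θ.IsRegular) (η : Ordinal) (hη : η < θ.ord)
    (hsuccη : ∃ ξ, η = ξ + 1) (lam : Cardinal) (hlam : lam = iterSucc θ η)
    (D : Ordinal → Ordinal → Set Ordinal) (hD : IsCoveringMatrix θ lam D)
    (hcp : CP θ lam D) :
    ¬ IsStationaryIn ({β | β < lam.ord ∧ θ < Ordinal.cof β} \ goodPoints θ lam D)
      lam.ord := by
  classical
  obtain ⟨ξ, rfl⟩ := hsuccη
  have hsucc1 : ∀ x : Ordinal, x < x + 1 := fun x => by
    rw [Ordinal.add_one_eq_succ]; exact Order.lt_succ x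
  have hξθ : ξ < θ.ord := lt_trans (hsucc1 ξ) hη
  have hlam' : lam = Order.succ (iterSucc θ ξ) := by
    rw [hlam, Ordinal.add_one_eq_succ, Stmt15Aux.iterSucc_succ]
  obtain ⟨T, hT, hTu, hcovT⟩ := hcp
  have hθ0 := hθ.aleph0_le
  have hν : θ ≤ iterSucc θ ξ := Stmt15Aux.le_iterSucc θ ξ
  have hlamreg : lam.IsRegular := hlam' ▸ Cardinal.isRegular_succ (hθ0.trans hν)
  have hlamcof : lam.ord.cof = lam := hlamreg.cof_eq
  have hθlam : θ < lam := hlam' ▸ lt_of_le_of_lt hν (Order.lt_succ _)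
  have hlaminf : ℵ₀ ≤ lam := hθ0.trans hθlam.le
  have hlamlim : Order.IsSuccLimit lam.ord := Cardinal.isSuccLimit_ord hlaminf
  have hclaim := Stmt15Aux.claim θ hθ ξ hξθ lam hlam' D hD.2.1 hD.2.2 T hT hTu hcovT
  have hwit : ∀ γ : Ordinal, ∃ i β, γ < lam.ord →
      i < θ.ord ∧ β < lam.ord ∧ T ∩ Set.Iio γ ⊆ D i β := by
    intro γ
    by_cases hγ : γ < lam.ord
    · obtain ⟨i, hi, β, hβ, hs⟩ := hclaim ξ le_rfl (T ∩ Set.Iio γ) inter_subset_left (by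
        refine (Cardinal.mk_le_mk_of_subset inter_subset_right).trans ?_
        rw [Ordinal.mk_Iio_ordinal]
        apply Cardinal.lift_le.mpr
        have hcd : γ.card < lam := Cardinal.lt_ord.mp hγ
        rw [hlam'] at hcd
        exact Order.lt_succ_iff.mp hcd)
      exact ⟨i, β, fun _ => ⟨hi, hβ, hs⟩⟩
    · exact ⟨0, 0, fun h => absurd h hγ⟩
  choose iG βG hG using hwit
  have htex : ∀ γ : Ordinal, ∃ δ, γ < lam.ord → δ ∈ T ∧ γ ≤ δ ∧ δ < lam.ord := by
    intro γ
    by_cases hγ : γ < lam.ord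
    · obtain ⟨δ, hδT, hδ⟩ := hTu γ hγ
      exact ⟨δ, fun _ => ⟨hδT, hδ, hT hδT⟩⟩
    · exact ⟨0, fun h => absurd h hγ⟩
  choose tG htG using htex
  set f : Ordinal → Ordinal := fun γ => max (βG γ) (tG γ) with hf
  have hflt : ∀ γ < lam.ord, f γ < lam.ord := fun γ hγ =>
    max_lt ((hG γ hγ).2.1) ((htG γ hγ).2.2)
  have hstep : ∀ β : Ordinal, ∃ s, β < lam.ord →
      s < lam.ord ∧ β < s ∧ ∀ γ ≤ β, f γ < s := by
    intro β
    by_cases hβ : β < lam.ord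
    · have hβ1 : β + 1 < lam.ord := by
        rw [Ordinal.add_one_eq_succ]; exact hlamlim.succ_lt hβ
      have himg : ∀ x ∈ f '' Set.Iic β, x < lam.ord := by
        rintro x ⟨γ, hγ, rfl⟩
        exact hflt γ (lt_of_le_of_lt hγ hβ)
      obtain ⟨bb, hbb, hbd⟩ := Stmt15Aux.bound_of_card_lt_cof himg (by
        refine Cardinal.mk_image_le.trans_lt ?_
        rw [hlamcof]
        refine lt_of_le_of_lt (Cardinal.mk_le_mk_of_subset
          (show Set.Iic β ⊆ Set.Iio (β + 1) from fun x hx => lt_of_le_of_lt hx (hsucc1 β))) ?_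
        rw [Ordinal.mk_Iio_ordinal]
        exact Cardinal.lift_lt.mpr (Cardinal.lt_ord.mp hβ1))
      have hbb1 : bb + 1 < lam.ord := by
        rw [Ordinal.add_one_eq_succ]; exact hlamlim.succ_lt hbb
      refine ⟨max (bb + 1) (β + 1), fun _ => ⟨max_lt hbb1 hβ1, ?_, ?_⟩⟩
      · exact lt_of_lt_of_le (hsucc1 β) (le_max_right _ _)
      · intro γ hγ
        have hfb : f γ ≤ bb := hbd _ ⟨γ, hγ, rfl⟩
        exact lt_of_le_of_lt hfb (lt_of_lt_of_le (hsucc1 bb) (le_max_left _ _))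
    · exact ⟨0, fun h => absurd h hβ⟩
  choose stepF hstepF using hstep
  set C : Set Ordinal := {β | 0 < β ∧ β < lam.ord ∧ ∀ γ < β, f γ < β} with hC
  have hclub : IsClubIn C lam.ord := by
    refine ⟨fun β hβ => hβ.2.1, ?_, ?_⟩
    · intro γ₀ hγ₀
      set seq : ℕ → Ordinal := fun n => Nat.recOn n (γ₀ + 1) (fun _ ih => stepF ih) with hseq
      have hseqS : ∀ n, seq (n + 1) = stepF (seq n) := fun n => rfl
      have hseqlt : ∀ n, seq n < lam.ord := by
        intro n
        induction n with
        | zero =>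
          show γ₀ + 1 < lam.ord
          rw [Ordinal.add_one_eq_succ]; exact hlamlim.succ_lt hγ₀
        | succ n ihn =>
          rw [hseqS]; exact (hstepF (seq n) ihn).1
      have hbdd : BddAbove (Set.range seq) := ⟨lam.ord, by rintro x ⟨n, rfl⟩; exact (hseqlt n).le⟩
      have hβlt : (⨆ n, seq n) < lam.ord := by
        refine Ordinal.iSup_lt_ord_lift ?_ hseqlt
        rw [Cardinal.mk_denumerable, Cardinal.lift_aleph0, hlamcof]
        exact lt_of_le_of_lt hθ0 hθlam
      have hle : ∀ n, seq n ≤ ⨆ n, seq n := fun n => le_ciSup hbdd n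
      have h0β : 0 < ⨆ n, seq n :=
        lt_of_lt_of_le (lt_of_le_of_lt (by simp) (hsucc1 γ₀)) (hle 0)
      refine ⟨⨆ n, seq n, ⟨h0β, hβlt, ?_⟩, le_trans (le_of_lt (hsucc1 γ₀)) (hle 0)⟩
      intro γ hγ
      have hex : ∃ n, γ < seq n := by
        by_contra hcon
        push_neg at hcon
        exact absurd (ciSup_le hcon) (not_le.mpr hγ)
      obtain ⟨n, hn⟩ := hex
      have hfγ : f γ < seq (n + 1) := by
        rw [hseqS]; exact (hstepF (seq n) (hseqlt n)).2.2 γ hn.le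
      exact lt_of_lt_of_le hfγ (hle (n + 1))
    · intro γ hγ h0 hacc
      refine ⟨h0, hγ, fun δ hδ => ?_⟩
      obtain ⟨ε, hεC, hδε, hεγ⟩ := hacc δ hδ
      exact lt_trans (hεC.2.2 δ hδε) hεγ
  intro hst
  obtain ⟨x, hxmem, hxC⟩ := hst C hclub
  obtain ⟨⟨hx1, hx2⟩, hxng⟩ := hxmem
  apply hxng
  refine ⟨hx1, hx2, T ∩ Set.Iio x, inter_subset_right, ?_, ?_⟩
  · intro γ hγ
    have hγlam : γ < lam.ord := lt_trans hγ hx1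
    obtain ⟨hδT, hδge, _⟩ := htG γ hγlam
    exact ⟨tG γ, ⟨hδT, lt_of_le_of_lt (le_max_right _ _) (hxC.2.2 γ hγ)⟩, hδge⟩
  · intro γ hγ
    have hγlam : γ < lam.ord := lt_trans hγ hx1
    obtain ⟨hiθ, hβlam, hsub⟩ := hG γ hγlam
    refine ⟨βG γ, lt_of_le_of_lt (le_max_left _ _) (hxC.2.2 γ hγ), iG γ, hiθ, ?_⟩
    exact fun y hy => hsub ⟨hy.1.1, hy.2⟩


end
end

section
/- Suppose θ < λ are infinite regular cardinals and f = ⟨f_β : β < λ⟩ is a club-increasing sequence of functions from θ to the ordinals. Then cf(γ_f) = θ or cf(γ_f) = λ. -/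
noncomputable section

universe u

open Cardinal Set

/-- If `θ < lam` are infinite regular cardinals and `f` is a club-increasing
sequence of length `lam` of functions from `θ` to the ordinals, then `cf(γ_f)` is `θ` or
`lam`. -/
theorem stmt16 (θ lam : Cardinal) (hθ : θ.IsRegular) (hlam : lam.IsRegular) (hθlam : θ < lam)
    (f : Ordinal → Ordinal → Ordinal) (hf : ClubIncreasing θ lam.ord f) :
    Ordinal.cof (seqBound θ lam.ord f) = θ ∨ Ordinal.cof (seqBound θ lam.ord f) = lam := by
  classical
  set Γ := seqBound θ lam.ord f with hΓdef
  have hθlim : Order.IsSuccLimit θ.ord := Cardinal.isSuccLimit_ord hθ.aleph0_le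
  have hlamlim : Order.IsSuccLimit lam.ord := Cardinal.isSuccLimit_ord hlam.aleph0_le
  have hθ0 : (0 : Ordinal) < θ.ord := hθ.ord_pos
  have hlam0 : (0 : Ordinal) < lam.ord := hlam.ord_pos
  have hmono : ∀ β < lam.ord, ∀ i j, i ≤ j → j < θ.ord → f β i ≤ f β j := hf.1
  have hlt : ∀ α β, α < β → β < lam.ord → ltStar θ (f α) (f β) := hf.2.1
  -- The defining set of `seqBound` is nonempty
  have hSne : {γ | ∀ β < lam.ord, ∀ i < θ.ord, f β i < γ}.Nonempty := by
    refine ⟨Ordinal.lsub (fun p : lam.ord.ToType × θ.ord.ToType =>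
      f ((Ordinal.ToType.mk (o := lam.ord)).symm p.1) ((Ordinal.ToType.mk (o := θ.ord)).symm p.2)),
      fun β hβ i hi => ?_⟩
    have := Ordinal.lt_lsub (fun p : lam.ord.ToType × θ.ord.ToType =>
      f ((Ordinal.ToType.mk (o := lam.ord)).symm p.1) ((Ordinal.ToType.mk (o := θ.ord)).symm p.2))
      (Ordinal.ToType.mk (o := lam.ord) ⟨β, hβ⟩, Ordinal.ToType.mk (o := θ.ord) ⟨i, hi⟩)
    simpa using this
  have hub : ∀ β < lam.ord, ∀ i < θ.ord, f β i < Γ := csInf_mem hSne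
  have hmin : ∀ γ < Γ, ∃ β < lam.ord, ∃ i < θ.ord, γ ≤ f β i := by
    intro γ hγ
    by_contra h
    push_neg at h
    exact hγ.not_ge (csInf_le' h)
  -- Γ is a limit ordinal
  have hΓlim : Order.IsSuccLimit Γ := by
    rw [Ordinal.isSuccLimit_iff, Order.isSuccPrelimit_iff_succ_lt]
    constructor
    · intro h0
      have := hub 0 hlam0 0 hθ0
      rw [h0] at this
      exact absurd this (by simp)
    · intro τ hτ
      obtain ⟨β, hβ, i, hi, hle⟩ := hmin τ hτ
      have hβ1 : β + 1 < lam.ord := by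
        rw [Ordinal.add_one_eq_succ]; exact hlamlim.succ_lt hβ
      obtain ⟨i₀, hi₀, hlt'⟩ := hlt β (β + 1) (lt_add_one β) hβ1
      have hj : max i i₀ < θ.ord := max_lt hi hi₀
      have h1 : f β i ≤ f β (max i i₀) := hmono β hβ i _ (le_max_left _ _) hj
      have h2 : f β (max i i₀) < f (β + 1) (max i i₀) := hlt' _ (le_max_right _ _) hj
      have h3 : f (β + 1) (max i i₀) < Γ := hub _ hβ1 _ hj
      exact (Order.succ_le_of_lt (hle.trans_lt (h1.trans_lt h2))).trans_lt h3
  -- cof Γ ≤ lam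
  have hcof_le : Γ.cof ≤ lam := by
    set G : lam.ord.ToType × θ.ord.ToType → Ordinal := fun p =>
      f ((Ordinal.ToType.mk (o := lam.ord)).symm p.1) ((Ordinal.ToType.mk (o := θ.ord)).symm p.2)
      with hG
    have hGlt : ∀ p, G p < Γ := fun p =>
      hub _ ((Ordinal.ToType.mk (o := lam.ord)).symm p.1).2 _
        ((Ordinal.ToType.mk (o := θ.ord)).symm p.2).2
    have hlsub : Ordinal.lsub G = Γ := by
      refine le_antisymm (Ordinal.lsub_le hGlt) (le_of_forall_lt fun γ hγ => ?_)
      obtain ⟨β, hβ, i, hi, hle⟩ := hmin γ hγ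
      have : G (Ordinal.ToType.mk (o := lam.ord) ⟨β, hβ⟩, Ordinal.ToType.mk (o := θ.ord) ⟨i, hi⟩)
          = f β i := by simp [hG]
      calc γ ≤ f β i := hle
        _ < Ordinal.lsub G := by
            rw [← this]; exact Ordinal.lt_lsub G _
    calc Γ.cof = (Ordinal.lsub G).cof := by rw [hlsub]
      _ ≤ #(lam.ord.ToType × θ.ord.ToType) := Ordinal.cof_lsub_le G
      _ = lam * θ := by
          simp [Cardinal.mk_prod, Cardinal.mk_toType, Cardinal.card_ord]
      _ = lam := by
          rw [Cardinal.mul_eq_max hlam.aleph0_le hθ.aleph0_le, max_eq_left hθlam.le]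
  rcases eq_or_lt_of_le hcof_le with heq | hκ
  · exact Or.inr heq
  -- Main case: cof Γ < lam; we show cof Γ = θ
  left
  obtain ⟨ι, F, hFl, hFc⟩ := Ordinal.exists_lsub_cof Γ
  have hFlt : ∀ a, F a < Γ := fun a => hFl ▸ Ordinal.lt_lsub F a
  have hFub : ∀ γ < Γ, ∃ a, γ ≤ F a := by
    intro γ hγ
    exact Ordinal.lt_lsub_iff.mp (hFl ▸ hγ)
  choose b hbl ix hixl hix using fun a => hmin (F a) (hFlt a)
  have hB : Ordinal.lsub b < lam.ord := by
    refine Ordinal.lsub_lt_ord ?_ hbl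
    rw [hFc, hlam.cof_eq]; exact hκ
  set B := Ordinal.lsub b with hBdef
  -- f B is cofinal in Γ
  have hcofin : ∀ γ < Γ, ∃ j < θ.ord, γ < f B j := by
    intro γ hγ
    obtain ⟨a, ha⟩ := hFub γ hγ
    obtain ⟨i₀, hi₀, h'⟩ := hlt (b a) B (Ordinal.lt_lsub b a) hB
    refine ⟨max (ix a) i₀, max_lt (hixl a) hi₀, ?_⟩
    calc γ ≤ f (b a) (ix a) := ha.trans (hix a)
      _ ≤ f (b a) (max (ix a) i₀) :=
          hmono (b a) (hbl a) _ _ (le_max_left _ _) (max_lt (hixl a) hi₀)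
      _ < f B (max (ix a) i₀) := h' _ (le_max_right _ _) (max_lt (hixl a) hi₀)
  -- cof Γ ≤ θ
  have hle1 : Γ.cof ≤ θ := by
    set G : θ.ord.ToType → Ordinal := fun x =>
      f B ((Ordinal.ToType.mk (o := θ.ord)).symm x) with hG
    have hGlt : ∀ x, G x < Γ := fun x =>
      hub B hB _ ((Ordinal.ToType.mk (o := θ.ord)).symm x).2
    have hlsub : Ordinal.lsub G = Γ := by
      refine le_antisymm (Ordinal.lsub_le hGlt) (le_of_forall_lt fun γ hγ => ?_)
      obtain ⟨j, hj, hlt'⟩ := hcofin γ hγ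
      have : G (Ordinal.ToType.mk (o := θ.ord) ⟨j, hj⟩) = f B j := by simp [hG]
      calc γ < f B j := hlt'
        _ < Ordinal.lsub G := by rw [← this]; exact Ordinal.lt_lsub G _
    calc Γ.cof = (Ordinal.lsub G).cof := by rw [hlsub]
      _ ≤ #θ.ord.ToType := Ordinal.cof_lsub_le G
      _ = θ := by rw [Cardinal.mk_toType, Cardinal.card_ord]
  -- θ ≤ cof Γ
  have hle2 : θ ≤ Γ.cof := by
    set T : ι → Set Ordinal := fun a => {j | j < θ.ord ∧ F a < f B j} with hT
    have hTne : ∀ a, (T a).Nonempty := by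
      intro a
      obtain ⟨j, hj, h'⟩ := hcofin (F a) (hFlt a)
      exact ⟨j, hj, h'⟩
    set jf : ι → Ordinal := fun a => sInf (T a) with hjf
    have hjmem : ∀ a, jf a ∈ T a := fun a => csInf_mem (hTne a)
    have hlsubj : Ordinal.lsub jf = θ.ord := by
      refine le_antisymm (Ordinal.lsub_le fun a => (hjmem a).1)
        (le_of_forall_lt fun k hk => ?_)
      have hk1 : Order.succ (f B k) < Γ := hΓlim.succ_lt (hub B hB k hk)
      obtain ⟨a, ha⟩ := hFub _ hk1
      have hka : k < jf a := by
        by_contra h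
        push_neg at h
        have : f B (jf a) ≤ f B k := hmono B hB _ k h hk
        exact absurd ((hjmem a).2.trans_le this)
          (not_lt.mpr ((Order.succ_le_iff.mp ha).le))
      exact hka.trans (Ordinal.lt_lsub jf a)
    calc θ = θ.ord.cof := hθ.cof_eq.symm
      _ = (Ordinal.lsub jf).cof := by rw [hlsubj]
      _ ≤ #ι := Ordinal.cof_lsub_le jf
      _ = Γ.cof := hFc
  exact le_antisymm hle1 hle2


end
end

section
/- Suppose θ < λ are infinite regular cardinals and D is a transitive, uniform, normal θ-covering matrix for λ. Then cf(β_D) = θ. -/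
noncomputable section

universe u

open Cardinal Set

/-! ### Auxiliary lemmas for `stmt17` -/

namespace Stmt17Aux

universe v

/-- The canonical (large) order type of a set of ordinals. -/
def ot (s : Set Ordinal.{v}) : Ordinal.{v+1} :=
  Ordinal.type (Subrel ((· < ·) : Ordinal.{v} → Ordinal.{v} → Prop) (· ∈ s))

theorem ot_Iio (a : Ordinal.{v}) : ot (Set.Iio a) = Ordinal.lift.{v+1} a := by
  rw [← Ordinal.typein_ordinal a, ← Ordinal.type_subrel]
  rfl

theorem ot_le_of_embed {s t : Set Ordinal.{v}} (f : s ↪o t) : ot s ≤ ot t := by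
  rw [ot, ot, Ordinal.type_le_iff']
  exact ⟨f.ltEmbedding⟩

theorem ot_eq_of_iso {s t : Set Ordinal.{v}} (f : s ≃o t) : ot s = ot t := by
  rw [ot, ot, Ordinal.type_eq]
  exact ⟨f.toRelIsoLT⟩

def subset_embed {s t : Set Ordinal.{v}} (hst : s ⊆ t) : s ↪o t :=
  OrderEmbedding.ofStrictMono (fun x => ⟨x.1, hst x.2⟩) (fun _ _ hxy => hxy)

theorem otp_spec {s : Set Ordinal.{v}} {b : Ordinal.{v}} (h : s ⊆ Set.Iio b) :
    Nonempty (s ≃o Set.Iio (otp.{v, v} s)) ∧ Ordinal.lift.{v+1} (otp.{v, v} s) = ot s := by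
  have hle : ot s ≤ Ordinal.lift.{v+1} b := by
    rw [← ot_Iio]
    exact ot_le_of_embed (subset_embed h)
  obtain ⟨o, ho⟩ := Ordinal.mem_range_lift_of_le.{v, v + 1} hle
  have hiso : Nonempty (s ≃o Set.Iio o) := by
    have h2 : ot s = ot (Set.Iio o) := by rw [ot_Iio, ho]
    rw [ot, ot, Ordinal.type_eq] at h2
    obtain ⟨e⟩ := h2
    exact ⟨OrderIso.ofRelIsoLT e⟩
  have hne : {o' : Ordinal.{v} | Nonempty (s ≃o Set.Iio o')}.Nonempty := ⟨o, hiso⟩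
  have hmem : Nonempty (s ≃o Set.Iio (otp.{v, v} s)) := csInf_mem hne
  refine ⟨hmem, ?_⟩
  obtain ⟨e⟩ := hmem
  rw [← ot_Iio (otp.{v, v} s)]
  exact (ot_eq_of_iso e).symm

theorem otp_le {s t : Set Ordinal.{v}} {b c : Ordinal.{v}} (hs : s ⊆ Set.Iio b)
    (ht : t ⊆ Set.Iio c) (f : s ↪o t) : otp.{v, v} s ≤ otp.{v, v} t := by
  have h2 := ot_le_of_embed f
  rw [← (otp_spec hs).2, ← (otp_spec ht).2] at h2
  exact Ordinal.lift_le.mp h2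

theorem otp_mono {s t : Set Ordinal.{v}} {c : Ordinal.{v}} (hst : s ⊆ t)
    (ht : t ⊆ Set.Iio c) : otp.{v, v} s ≤ otp.{v, v} t :=
  otp_le (hst.trans ht) ht (subset_embed hst)

theorem otp_Iio (a : Ordinal.{v}) : otp.{v, v} (Set.Iio a) = a := by
  have h : Set.Iio a ⊆ Set.Iio (Order.succ a) := fun x hx => hx.trans (Order.lt_succ a)
  have := (otp_spec h).2
  rw [ot_Iio] at this
  exact Ordinal.lift_inj.mp this

theorem otp_lt {s t : Set Ordinal.{v}} {α c : Ordinal.{v}} (hsα : s ⊆ Set.Iio α)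
    (hst : s ⊆ t) (hα : α ∈ t) (ht : t ⊆ Set.Iio c) : otp.{v, v} s < otp.{v, v} t := by
  obtain ⟨e⟩ := (otp_spec ht).1
  have haαlt : (e ⟨α, hα⟩ : Ordinal) < otp.{v, v} t := (e ⟨α, hα⟩).2
  have f : s ↪o (Set.Iio ((e ⟨α, hα⟩ : Ordinal)) : Set Ordinal.{v}) := by
    refine OrderEmbedding.ofStrictMono (fun x => ⟨(e ⟨x.1, hst x.2⟩ : Ordinal), ?_⟩) ?_
    · have hxα : (⟨x.1, hst x.2⟩ : t) < ⟨α, hα⟩ := by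
        rw [Subtype.mk_lt_mk]
        exact hsα x.2
      exact e.lt_iff_lt.mpr hxα
    · intro x y hxy
      show (e ⟨x.1, hst x.2⟩ : Ordinal) < (e ⟨y.1, hst y.2⟩ : Ordinal)
      exact Subtype.coe_lt_coe.mpr (e.lt_iff_lt.mpr (Subtype.mk_lt_mk.mpr
        (Subtype.coe_lt_coe.mpr hxy)))
  calc otp.{v, v} s ≤ otp.{v, v} (Set.Iio ((e ⟨α, hα⟩ : Ordinal))) := by
        exact otp_le hsα (Set.Iio_subset_Iio (Order.lt_succ _).le) f
    _ = (e ⟨α, hα⟩ : Ordinal) := otp_Iio _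
    _ < otp.{v, v} t := haαlt

end Stmt17Aux

/-- If `θ < lam` are infinite regular cardinals and `D` is a transitive,
uniform, normal `θ`-covering matrix for `lam`, then `cf(β_D) = θ`. -/
theorem stmt17 (θ lam : Cardinal) (hθ : θ.IsRegular) (hlam : lam.IsRegular) (hθlam : θ < lam)
    (D : Ordinal → Ordinal → Set Ordinal) (hD : IsCoveringMatrix θ lam D)
    (htr : TransitiveMatrix θ lam D) (hu : UniformMatrix θ lam D)
    (hn : NormalMatrix θ lam D) :
    Ordinal.cof (matrixBound θ lam D) = θ := by
  classical
  obtain ⟨bnd, hbnd_lt, hbnd⟩ := hn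
  have hmem : ∀ i < θ.ord, ∀ γ < lam.ord, otp (D i γ) < matrixBound θ lam D :=
    csInf_mem (⟨bnd, hbnd⟩ : Set.Nonempty {b | ∀ i < θ.ord, ∀ γ < lam.ord, otp (D i γ) < b})
  set βD := matrixBound θ lam D with hβDdef
  have hβDlt : βD < lam.ord := lt_of_le_of_lt (csInf_le' hbnd) hbnd_lt
  have hθord : θ.ord < lam.ord := Cardinal.ord_lt_ord.mpr hθlam
  have hθlim : Order.IsSuccLimit θ.ord := Cardinal.isSuccLimit_ord hθ.aleph0_le
  have hθpos : (0 : Ordinal) < θ.ord := hθlim.pos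
  have hlamlim : Order.IsSuccLimit lam.ord := Cardinal.isSuccLimit_ord hlam.aleph0_le
  have hlam0 : (0 : Ordinal) < lam.ord := hlamlim.pos
  have hDsub : ∀ i < θ.ord, ∀ γ < lam.ord, D i γ ⊆ Set.Iio γ := by
    intro i hi γ hγ
    rw [← hD.1 γ hγ]
    exact fun x hx => Set.mem_biUnion hi hx
  have hmono : ∀ γ < lam.ord, ∀ i j, i ≤ j → j < θ.ord → D i γ ⊆ D j γ := by
    intro γ hγ i j hij hj
    rcases eq_or_lt_of_le hij with rfl | h
    · exact subset_rfl
    · exact hD.2.1 γ hγ i j h hj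
  have stepA : ∀ i₀ < θ.ord, ∀ γ₀ < lam.ord, ∃ k < θ.ord, ∃ β < lam.ord,
      otp (D i₀ γ₀) < otp (D k β) := by
    intro i₀ hi₀ γ₀ hγ₀
    have hβ : Order.succ γ₀ < lam.ord := hlamlim.succ_lt hγ₀
    obtain ⟨j, hj, hsubj⟩ := hD.2.2 γ₀ (Order.succ γ₀) (Order.lt_succ γ₀) hβ i₀ hi₀
    have hγ₀mem : γ₀ ∈ ⋃ i ∈ Set.Iio θ.ord, D i (Order.succ γ₀) := by
      rw [hD.1 _ hβ]
      exact Order.lt_succ γ₀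
    simp only [Set.mem_iUnion, Set.mem_Iio, exists_prop] at hγ₀mem
    obtain ⟨m, hm, hγ₀m⟩ := hγ₀mem
    refine ⟨max j m, max_lt hj hm, Order.succ γ₀, hβ, ?_⟩
    exact Stmt17Aux.otp_lt (hDsub i₀ hi₀ γ₀ hγ₀)
      (hsubj.trans (hmono _ hβ j _ (le_max_left j m) (max_lt hj hm)))
      (hmono _ hβ m _ (le_max_right j m) (max_lt hj hm) hγ₀m)
      (hDsub _ (max_lt hj hm) _ hβ)
  have hβD0 : βD ≠ 0 := by
    intro h0
    have h1 := hmem 0 hθpos 0 hlam0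
    rw [h0] at h1
    exact absurd h1 (not_lt_of_ge zero_le)
  have hwit : ∀ d < βD, ∃ i < θ.ord, ∃ γ < lam.ord, d ≤ otp (D i γ) := by
    intro d hd
    by_contra h
    push_neg at h
    exact absurd (csInf_le' (show d ∈ {b | ∀ i < θ.ord, ∀ γ < lam.ord, otp (D i γ) < b}
      from h)) (not_le.mpr hd)
  have hlim : Order.IsSuccLimit βD := by
    refine Ordinal.isSuccLimit_iff.mpr ⟨hβD0, Order.isSuccPrelimit_of_succ_lt fun d hd => ?_⟩
    obtain ⟨i₀, hi₀, γ₀, hγ₀, hdle⟩ := hwit d hd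
    obtain ⟨k, hk, β, hβ, hltk⟩ := stepA i₀ hi₀ γ₀ hγ₀
    exact lt_of_le_of_lt (Order.succ_le_of_lt (lt_of_le_of_lt hdle hltk)) (hmem k hk β hβ)
  have key : ∀ (ι : Type _) (ξ : ι → Ordinal), #ι < lam → Ordinal.lsub ξ = βD →
      ∃ γ' < lam.ord, ∃ jw : ι → Ordinal, (∀ η, jw η < θ.ord) ∧
        ∀ η, ξ η ≤ otp (D (jw η) γ') := by
    intro ι ξ hι hξ
    have hwitη : ∀ η, ∃ i < θ.ord, ∃ γ < lam.ord, ξ η ≤ otp (D i γ) :=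
      fun η => hwit (ξ η) (hξ ▸ Ordinal.lt_lsub ξ η)
    choose iw hiw γw hγw hle using hwitη
    have hγ' : Ordinal.lsub γw < lam.ord := by
      refine Ordinal.lsub_lt_ord ?_ fun η => hγw η
      rw [hlam.cof_eq]
      exact hι
    refine ⟨Ordinal.lsub γw, hγ', ?_⟩
    have hco : ∀ η, ∃ j < θ.ord, D (iw η) (γw η) ⊆ D j (Ordinal.lsub γw) :=
      fun η => hD.2.2 (γw η) _ (Ordinal.lt_lsub γw η) hγ' (iw η) (hiw η)
    choose jw hjw hsub using hco
    exact ⟨jw, hjw, fun η => le_trans (hle η)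
      (Stmt17Aux.otp_mono (hsub η) (hDsub (jw η) (hjw η) _ hγ'))⟩
  have hcof := csInf_mem (Ordinal.cof_lsub_def_nonempty βD)
  rw [← Ordinal.cof_eq_sInf_lsub] at hcof
  obtain ⟨ι, ξ, hξlsub, hξmk⟩ := hcof
  have hcof_lt_lam : βD.cof < lam :=
    lt_of_le_of_lt (Ordinal.cof_le_card βD) (Cardinal.lt_ord.mp hβDlt)
  obtain ⟨γ', hγ'lt, jw, hjw, hjle⟩ := key ι ξ (by rw [hξmk]; exact hcof_lt_lam) hξlsub
  have hcof_le : βD.cof ≤ θ := by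
    set g : (θ.ord).ToType → Ordinal := fun x =>
      otp (D (((Ordinal.ToType.mk (o := θ.ord)).symm x : Set.Iio θ.ord) : Ordinal) γ') with hg
    have hgS : ∀ x, g x < βD := fun x =>
      hmem _ ((Ordinal.ToType.mk (o := θ.ord)).symm x).2 γ' hγ'lt
    have hlsubg : Ordinal.lsub g = βD := by
      refine le_antisymm (Ordinal.lsub_le hgS) ?_
      rw [← hξlsub]
      refine Ordinal.lsub_le fun η => ?_
      have heq : g (Ordinal.ToType.mk (o := θ.ord) ⟨jw η, hjw η⟩) = otp (D (jw η) γ') := by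
        rw [hg]
        simp
      calc ξ η ≤ otp (D (jw η) γ') := hjle η
        _ = g (Ordinal.ToType.mk (o := θ.ord) ⟨jw η, hjw η⟩) := heq.symm
        _ < Ordinal.lsub g := Ordinal.lt_lsub g _
    calc βD.cof = (Ordinal.lsub g).cof := by rw [hlsubg]
      _ ≤ #((θ.ord).ToType) := Ordinal.cof_lsub_le g
      _ = θ := by rw [Cardinal.mk_toType, Cardinal.card_ord]
  refine le_antisymm hcof_le (le_of_not_gt fun hlt => ?_)
  have hi'θ : Ordinal.lsub jw < θ.ord := by
    refine Ordinal.lsub_lt_ord ?_ hjw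
    rw [hθ.cof_eq, hξmk]
    exact hlt
  have hX : otp (D (Ordinal.lsub jw) γ') < βD := hmem _ hi'θ γ' hγ'lt
  have hall : ∀ η, ξ η ≤ otp (D (Ordinal.lsub jw) γ') := fun η =>
    le_trans (hjle η) (Stmt17Aux.otp_mono
      (hmono γ' hγ'lt (jw η) _ (le_of_lt (Ordinal.lt_lsub jw η)) hi'θ)
      (hDsub _ hi'θ γ' hγ'lt))
  have hcon : βD ≤ Order.succ (otp (D (Ordinal.lsub jw) γ')) := by
    rw [← hξlsub]
    exact Ordinal.lsub_le fun η => lt_of_le_of_lt (hall η) (Order.lt_succ _)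
  exact absurd hcon (not_le.mpr (hlim.succ_lt hX))


end
end
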